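/- Change-of-measure bound on the type-II error: (Q_{M̃_k} × P_{Ỹ_kⁿ})(A_k) ≤ β_{k,n} · Δ_k^{−(k+1)}, and since P_{M̃_k Ỹ_kⁿ}(A_k) = 1, it follows that −(1/n)·log β_{k,n} ≤ (1/n)·D(P_{M̃_k Ỹ_kⁿ} ‖ Q_{M̃_k} × P_{Ỹ_kⁿ}) + δ_n', where δ_n' := 1/n − ((k+1)/n)·log Δ_k. -/

import Mathlib

open Filter

noncomputable section

/-- `p` is a probability mass function on the finite alphabet `α`. -/
def IsPMF {α : Type*} [Fintype α] (p : α → ℝ) : Prop :=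
  (∀ a, 0 ≤ p a) ∧ ∑ a, p a = 1

open Classical in
/-- Probability that the random variable `X` takes the value `a`, under the pmf `p`. -/
def probEq {Ω α : Type*} [Fintype Ω] (p : Ω → ℝ) (X : Ω → α) (a : α) : ℝ :=
  ∑ ω, if X ω = a then p ω else 0

/-- Shannon entropy (base 2) of the random variable `X` under the pmf `p`. -/
def entOf {Ω α : Type*} [Fintype Ω] (p : Ω → ℝ) (X : Ω → α) : ℝ :=
  -∑ ω, p ω * Real.logb 2 (probEq p X (X ω))

/-- Conditional Shannon entropy `H(X | Y)` under the pmf `p`. -/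
def condEntOf {Ω α β : Type*} [Fintype Ω] (p : Ω → ℝ) (X : Ω → α) (Y : Ω → β) : ℝ :=
  entOf p (fun ω => (X ω, Y ω)) - entOf p Y

/-- Mutual information `I(X ; Y)` under the pmf `p`. -/
def miOf {Ω α β : Type*} [Fintype Ω] (p : Ω → ℝ) (X : Ω → α) (Y : Ω → β) : ℝ :=
  entOf p X + entOf p Y - entOf p (fun ω => (X ω, Y ω))

/-- Conditional mutual information `I(X ; Y | Z)` under the pmf `p`. -/
def condMIOf {Ω α β γ : Type*} [Fintype Ω] (p : Ω → ℝ) (X : Ω → α) (Y : Ω → β)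
    (Z : Ω → γ) : ℝ :=
  condEntOf p X Z + condEntOf p Y Z - condEntOf p (fun ω => (X ω, Y ω)) Z

open Classical in
/-- Probability of the set `S` under the pmf `p`. -/
def probSet {Ω : Type*} [Fintype Ω] (p : Ω → ℝ) (S : Set Ω) : ℝ :=
  ∑ ω, if ω ∈ S then p ω else 0

open Classical in
/-- Number of occurrences of the symbol `a` in the sequence `w`. -/
def Ncount {W : Type*} {n : ℕ} (w : Fin n → W) (a : W) : ℕ :=
  (Finset.univ.filter (fun i => w i = a)).card

/-- The strongly typical set `T_μ⁽ⁿ⁾(P)`. -/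
def typicalSet {W : Type*} [Fintype W] (P : W → ℝ) (μ : ℝ) (n : ℕ) : Set (Fin n → W) :=
  {w | ∀ a, |((Ncount w a : ℝ)) / n - P a| ≤ μ ∧ (P a = 0 → Ncount w a = 0)}

/-- The typicality parameter `μ_n = n^{-1/3}`. -/
def μseq (n : ℕ) : ℝ := (n : ℝ) ^ (-(1/3 : ℝ))

section KHop

variable (k : ℕ) (Y : ℕ → Type) [∀ i, Fintype (Y i)] [∀ i, Nonempty (Y i)]

/-- The index `j` viewed as an element of `Fin (k+1)`. -/
def idxLo (j : Fin k) : Fin (k + 1) := ⟨(j : ℕ), Nat.lt_succ_of_lt j.isLt⟩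

/-- The index `j+1` viewed as an element of `Fin (k+1)`. -/
def idxHi (j : Fin k) : Fin (k + 1) := ⟨(j : ℕ) + 1, Nat.succ_lt_succ j.isLt⟩

variable (P : (∀ i : Fin (k + 1), Y i) → ℝ)

/-- The i.i.d. law of the source tuple `(Y₀ⁿ,…,Y_kⁿ)` under hypothesis `H = 0`. -/
def iidK (n : ℕ) (ys : ∀ i : Fin (k + 1), Fin n → Y i) : ℝ :=
  ∏ t : Fin n, P (fun i => ys i t)

open Classical in
/-- The marginal pmf of `Y_i` under `P`. -/
def margK (i : Fin (k + 1)) (c : Y i) : ℝ :=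
  ∑ y : ∀ i : Fin (k + 1), Y i, if y i = c then P y else 0

/-- The product of the marginals `P_{Y₀}·P_{Y₁}⋯P_{Y_k}`. -/
def prodMargK (y : ∀ i : Fin (k + 1), Y i) : ℝ := ∏ i, margK k Y P i (y i)

/-- The i.i.d. law of the source tuple under hypothesis `H = 1` (product of marginals). -/
def iidQK (n : ℕ) (ys : ∀ i : Fin (k + 1), Fin n → Y i) : ℝ :=
  ∏ t : Fin n, prodMargK k Y P (fun i => ys i t)

open Classical in
/-- The pairwise marginal `P_{Y_j Y_{j+1}}` of `P`. -/
def pairMargK (j : Fin k) (a : Y (j : ℕ)) (b : Y ((j : ℕ) + 1)) : ℝ :=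
  ∑ y : ∀ i : Fin (k + 1), Y i, if y (idxLo k j) = a ∧ y (idxHi k j) = b then P y else 0

open Classical in
/-- `P` forms the Markov chain `Y₀ → Y₁ → ⋯ → Y_k`. -/
def IsMarkovChainK : Prop :=
  ∀ y : ∀ i : Fin (k + 1), Y i,
    P y * ∏ i ∈ Finset.univ.filter (fun i : Fin (k + 1) => 0 < (i : ℕ) ∧ (i : ℕ) < k),
        margK k Y P i (y i)
      = ∏ j : Fin k, pairMargK k Y P j (y (idxLo k j)) (y (idxHi k j))

/-- Extension of a source tuple to all natural indices (junk beyond `k`). -/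
def extendTup (n : ℕ) (ys : ∀ i : Fin (k + 1), Fin n → Y i) (ℓ : ℕ) : Fin n → Y ℓ :=
  if h : ℓ < k + 1 then ys ⟨ℓ, h⟩ else fun _ => Classical.arbitrary (Y ℓ)

/-- The messages computed recursively from the encoders:
`msgRec φ ys' ℓ` is the message `M_{ℓ+1}`. -/
def msgRec (n : ℕ) (φ : ∀ ℓ : ℕ, (Fin n → Y ℓ) → ℕ → ℕ)
    (ys' : ∀ ℓ : ℕ, Fin n → Y ℓ) : ℕ → ℕ
  | 0 => φ 0 (ys' 0) 0
  | (ℓ + 1) => φ (ℓ + 1) (ys' (ℓ + 1)) (msgRec n φ ys' ℓ)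

/-- A source tuple viewed as one sequence over the product alphabet. -/
def tupleSeq {n : ℕ} (ys : ∀ i : Fin (k + 1), Fin n → Y i) :
    Fin n → (∀ i : Fin (k + 1), Y i) :=
  fun t i => ys i t

/-- The acceptance region `A_k` of the decision center `R_k`: the tuples on which the
guess is `Ĥ_k = 0` (decision `false`). -/
def acceptSet (n : ℕ) (φ : ∀ ℓ : ℕ, (Fin n → Y ℓ) → ℕ → ℕ)
    (g : (Fin n → Y k) → ℕ → Bool) : Set (∀ i : Fin (k + 1), Fin n → Y i) :=
  {ys | g (extendTup k Y n ys k) (msgRec Y n φ (extendTup k Y n ys) (k - 1)) = false}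

/-- The set `D_k`: the acceptance region intersected with the strongly typical set. -/
def DsetCM (n : ℕ) (φ : ∀ ℓ : ℕ, (Fin n → Y ℓ) → ℕ → ℕ)
    (g : (Fin n → Y k) → ℕ → Bool) : Set (∀ i : Fin (k + 1), Fin n → Y i) :=
  acceptSet k Y n φ g ∩ {ys | tupleSeq k Y ys ∈ typicalSet P (μseq n) n}

/-- `Δ_k = Pr[(Y₀ⁿ,…,Y_kⁿ) ∈ D_k]` under `H = 0`. -/
def DeltaCM (n : ℕ) (φ : ∀ ℓ : ℕ, (Fin n → Y ℓ) → ℕ → ℕ)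
    (g : (Fin n → Y k) → ℕ → Bool) : ℝ :=
  probSet (iidK k Y P n) (DsetCM k Y P n φ g)

open Classical in
/-- The change-of-measure pmf of `(Ỹ₀ⁿ,…,Ỹ_kⁿ)`: the `H = 0` law conditioned on `D_k`. -/
def ptildeCM (n : ℕ) (φ : ∀ ℓ : ℕ, (Fin n → Y ℓ) → ℕ → ℕ)
    (g : (Fin n → Y k) → ℕ → Bool) (ys : ∀ i : Fin (k + 1), Fin n → Y i) : ℝ :=
  if ys ∈ DsetCM k Y P n φ g then iidK k Y P n ys / DeltaCM k Y P n φ g else 0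

/-- The pmf of `((Ỹ₀ⁿ,…,Ỹ_kⁿ), T)` with `T` uniform on `{1,…,n}` independent of the rest. -/
def pfullCM (n : ℕ) (φ : ∀ ℓ : ℕ, (Fin n → Y ℓ) → ℕ → ℕ)
    (g : (Fin n → Y k) → ℕ → Bool)
    (ω : (∀ i : Fin (k + 1), Fin n → Y i) × Fin n) : ℝ :=
  ptildeCM k Y P n φ g ω.1 / n

/-- The random variable `M̃_{j+1}` (the message of hop `j+1` applied to the tilde sources). -/
def MtilRV (n : ℕ) (φ : ∀ ℓ : ℕ, (Fin n → Y ℓ) → ℕ → ℕ) (j : ℕ)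
    (ω : (∀ i : Fin (k + 1), Fin n → Y i) × Fin n) : ℕ :=
  msgRec Y n φ (extendTup k Y n ω.1) j

open Classical in
/-- The prefixes `(Ỹ₀^{T−1},…,Ỹ_k^{T−1})` as a random variable. -/
def prefixAll (n : ℕ) (ω : (∀ i : Fin (k + 1), Fin n → Y i) × Fin n) :
    ∀ i : Fin (k + 1), Fin n → Option (Y i) :=
  fun i t => if (t : ℕ) < (ω.2 : ℕ) then some (ω.1 i t) else none

/-- The auxiliary random variable `U_{j+1} := (M̃_{j+1}, Ỹ₀^{T−1},…,Ỹ_k^{T−1}, T)`. -/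
def UvarCM (n : ℕ) (φ : ∀ ℓ : ℕ, (Fin n → Y ℓ) → ℕ → ℕ) (j : ℕ)
    (ω : (∀ i : Fin (k + 1), Fin n → Y i) × Fin n) :
    ℕ × (∀ i : Fin (k + 1), Fin n → Option (Y i)) × Fin n :=
  (MtilRV k Y n φ j ω, prefixAll k Y n ω, ω.2)

/-- The type-I error probability `α_{k,n} = Pr[Ĥ_k = 1 | H = 0]`. -/
def alphaCM (n : ℕ) (φ : ∀ ℓ : ℕ, (Fin n → Y ℓ) → ℕ → ℕ)
    (g : (Fin n → Y k) → ℕ → Bool) : ℝ :=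
  probSet (iidK k Y P n) ((acceptSet k Y n φ g)ᶜ)

/-- The type-II error probability `β_{k,n} = Pr[Ĥ_k = 0 | H = 1]`. -/
def betaCM (n : ℕ) (φ : ∀ ℓ : ℕ, (Fin n → Y ℓ) → ℕ → ℕ)
    (g : (Fin n → Y k) → ℕ → Bool) : ℝ :=
  probSet (iidQK k Y P n) (acceptSet k Y n φ g)

end KHop

section KHopQ

variable (k : ℕ) (Y : ℕ → Type) [∀ i, Fintype (Y i)] [∀ i, Nonempty (Y i)]
variable (P : (∀ i : Fin (k + 1), Y i) → ℝ)

/-- Extension of a partial source tuple `(y₀ⁿ,…,y_{k−1}ⁿ)` to all natural indices. -/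
def partialExt (n : ℕ) (pys : ∀ j : Fin k, Fin n → Y (j : ℕ)) (ℓ : ℕ) : Fin n → Y ℓ :=
  if h : ℓ < k then pys ⟨ℓ, h⟩ else fun _ => Classical.arbitrary (Y ℓ)

/-- The marginal law of the tilde sequence `Ỹ_iⁿ` (component `i` of the tilde tuple). -/
def margSeqT (n : ℕ) (φ : ∀ ℓ : ℕ, (Fin n → Y ℓ) → ℕ → ℕ)
    (g : (Fin n → Y k) → ℕ → Bool) (i : Fin (k + 1)) (s : Fin n → Y i) : ℝ :=
  probEq (ptildeCM k Y P n φ g) (fun ys => ys i) s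

open Classical in
/-- `Q_{M̃_k}`: the pmf of the message `m_k` obtained by applying the encoders to
independent inputs with the marginal distributions `P_{Ỹ₀ⁿ},…,P_{Ỹ_{k−1}ⁿ}`. -/
def QmsgCM (n : ℕ) (φ : ∀ ℓ : ℕ, (Fin n → Y ℓ) → ℕ → ℕ)
    (g : (Fin n → Y k) → ℕ → Bool) (m : ℕ) : ℝ :=
  ∑ pys : ∀ j : Fin k, Fin n → Y (j : ℕ),
    (∏ j : Fin k, margSeqT k Y P n φ g (idxLo k j) (pys j)) *
      (if msgRec Y n φ (partialExt k Y n pys) (k - 1) = m then 1 else 0)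

open Classical in
/-- `(Q_{M̃_k} × P_{Ỹ_kⁿ})(A_k)`: the probability under the product of `Q_{M̃_k}` and the
tilde marginal of `Ỹ_kⁿ` of the acceptance event `g_k(m_k, y_kⁿ) = 0`. -/
def QPaccCM (n : ℕ) (φ : ∀ ℓ : ℕ, (Fin n → Y ℓ) → ℕ → ℕ)
    (g : (Fin n → Y k) → ℕ → Bool) : ℝ :=
  ∑ pys : ∀ j : Fin k, Fin n → Y (j : ℕ), ∑ yk : Fin n → Y k,
    (∏ j : Fin k, margSeqT k Y P n φ g (idxLo k j) (pys j)) *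
      margSeqT k Y P n φ g (Fin.last k) yk *
      (if g yk (msgRec Y n φ (partialExt k Y n pys) (k - 1)) = false then 1 else 0)

/-- The pair `(M̃_k, Ỹ_kⁿ)` as a random variable of the tilde source tuple. -/
def MYpairCM (n : ℕ) (φ : ∀ ℓ : ℕ, (Fin n → Y ℓ) → ℕ → ℕ)
    (ys : ∀ i : Fin (k + 1), Fin n → Y i) : ℕ × (Fin n → Y k) :=
  (msgRec Y n φ (extendTup k Y n ys) (k - 1), extendTup k Y n ys k)

/-- The KL divergence `D(P_{M̃_k Ỹ_kⁿ} ‖ Q_{M̃_k} × P_{Ỹ_kⁿ})`. -/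
def klJointCM (n : ℕ) (φ : ∀ ℓ : ℕ, (Fin n → Y ℓ) → ℕ → ℕ)
    (g : (Fin n → Y k) → ℕ → Bool) : ℝ :=
  ∑ ys : ∀ i : Fin (k + 1), Fin n → Y i,
    ptildeCM k Y P n φ g ys *
      Real.logb 2
        (probEq (ptildeCM k Y P n φ g) (MYpairCM k Y n φ) (MYpairCM k Y n φ ys)
          / (QmsgCM k Y P n φ g (MYpairCM k Y n φ ys).1 *
              margSeqT k Y P n φ g (Fin.last k) (MYpairCM k Y n φ ys).2))

end KHopQ
-- test basic facts
section Aux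
open Classical

lemma prod_ite_zero {ι : Type*} [Fintype ι] (c : ι → Prop) [DecidablePred c] (a : ι → ℝ) :
    (∏ i, if c i then a i else 0) = if ∀ i, c i then ∏ i, a i else 0 := by
  by_cases h : ∀ i, c i
  · rw [if_pos h]; exact Finset.prod_congr rfl fun i _ => if_pos (h i)
  · obtain ⟨i, hi⟩ := not_forall.mp h
    rw [if_neg h]
    exact Finset.prod_eq_zero (Finset.mem_univ i) (by simp [hi])

lemma probEq_nonneg {Ω α : Type*} [Fintype Ω] {p : Ω → ℝ} (hp : ∀ ω, 0 ≤ p ω) (X : Ω → α)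
    (a : α) : 0 ≤ probEq p X a := by
  unfold probEq
  refine Finset.sum_nonneg fun ω _ => ?_
  split <;> simp [hp ω]

lemma le_probEq {Ω α : Type*} [Fintype Ω] {p : Ω → ℝ} (hp : ∀ ω, 0 ≤ p ω) (X : Ω → α)
    {ω₀ : Ω} {a : α} (h : X ω₀ = a) : p ω₀ ≤ probEq p X a := by
  unfold probEq
  have := Finset.single_le_sum (f := fun ω => if X ω = a then p ω else 0)
    (fun ω _ => by split <;> simp [hp ω]) (Finset.mem_univ ω₀)
  simpa [h] using this

lemma probEq_eq_filter {Ω α : Type*} [Fintype Ω] (p : Ω → ℝ) (X : Ω → α) (a : α)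
    [inst : DecidablePred (fun ω => X ω = a)] :
    probEq p X a = ∑ ω ∈ Finset.univ.filter (fun ω => X ω = a), p ω := by
  unfold probEq
  rw [Finset.sum_filter]
  exact Finset.sum_congr rfl fun ω _ => by by_cases h : X ω = a <;> simp [h]

lemma sum_probEq_mul {Ω α : Type*} [Fintype Ω] [DecidableEq α] (p : Ω → ℝ) (X : Ω → α) (f : α → ℝ) :
    ∑ ω, p ω * f (X ω) = ∑ a ∈ Finset.image X Finset.univ, probEq p X a * f a := by
  rw [← Finset.sum_fiberwise_of_maps_to
      (fun x _ => Finset.mem_image_of_mem X (Finset.mem_univ x)) (fun ω => p ω * f (X ω))]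
  refine Finset.sum_congr rfl fun a _ => ?_
  rw [probEq_eq_filter, Finset.sum_mul]
  refine Finset.sum_congr rfl fun ω hω => ?_
  rw [(Finset.mem_filter.mp hω).2]

end Aux

-- test snocEquiv typechecks with our family
example (k n : ℕ) (Y : ℕ → Type) [∀ i, Fintype (Y i)] :
    (Fin n → Y k) × (∀ j : Fin k, Fin n → Y (j : ℕ)) ≃ (∀ i : Fin (k+1), Fin n → Y (i : ℕ)) :=
  Fin.snocEquiv (fun i : Fin (k+1) => Fin n → Y (i : ℕ))

example (k : ℕ) (j : Fin k) : idxLo k j = Fin.castSucc j := rfl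
example (k : ℕ) : (⟨k, Nat.lt_succ_self k⟩ : Fin (k+1)) = Fin.last k := rfl
section Aux2
set_option linter.unusedSectionVars false
set_option linter.unusedVariables false
open Classical

variable {k : ℕ} {Y : ℕ → Type} [∀ i, Fintype (Y i)] [∀ i, Nonempty (Y i)]
variable {P : (∀ i : Fin (k + 1), Y i) → ℝ}

lemma iidK_nonneg (hP : ∀ y, 0 ≤ P y) (n : ℕ) (ys : ∀ i : Fin (k + 1), Fin n → Y i) :
    0 ≤ iidK k Y P n ys :=
  Finset.prod_nonneg fun _ _ => hP _

lemma probSet_nonneg {Ω : Type*} [Fintype Ω] {p : Ω → ℝ} (hp : ∀ ω, 0 ≤ p ω) (S : Set Ω) :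
    0 ≤ probSet p S := by
  unfold probSet
  refine Finset.sum_nonneg fun ω _ => ?_
  split <;> simp [hp ω]

lemma ptildeCM_nonneg (hP : ∀ y, 0 ≤ P y) (n : ℕ) (φ : ∀ ℓ : ℕ, (Fin n → Y ℓ) → ℕ → ℕ)
    (g : (Fin n → Y k) → ℕ → Bool) (ys : ∀ i : Fin (k + 1), Fin n → Y i) :
    0 ≤ ptildeCM k Y P n φ g ys := by
  unfold ptildeCM
  split
  · have h1 := iidK_nonneg hP n ys
    have h2 := probSet_nonneg (iidK_nonneg hP n) (DsetCM k Y P n φ g)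
    positivity
  · exact le_rfl

lemma sum_ptildeCM (hP : ∀ y, 0 ≤ P y) (n : ℕ) (φ : ∀ ℓ : ℕ, (Fin n → Y ℓ) → ℕ → ℕ)
    (g : (Fin n → Y k) → ℕ → Bool) (hΔ : 0 < DeltaCM k Y P n φ g) :
    ∑ ys, ptildeCM k Y P n φ g ys = 1 := by
  unfold ptildeCM
  have : ∀ ys, (if ys ∈ DsetCM k Y P n φ g then iidK k Y P n ys / DeltaCM k Y P n φ g else 0)
      = (if ys ∈ DsetCM k Y P n φ g then iidK k Y P n ys else 0) / DeltaCM k Y P n φ g := by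
    intro ys; split <;> simp
  rw [Finset.sum_congr rfl fun ys _ => this ys, ← Finset.sum_div]
  have : ∑ ys, (if ys ∈ DsetCM k Y P n φ g then iidK k Y P n ys else 0)
      = DeltaCM k Y P n φ g := rfl
  rw [this, div_self hΔ.ne']

lemma ptildeCM_le (hP : ∀ y, 0 ≤ P y) (n : ℕ) (φ : ∀ ℓ : ℕ, (Fin n → Y ℓ) → ℕ → ℕ)
    (g : (Fin n → Y k) → ℕ → Bool) (hΔ : 0 < DeltaCM k Y P n φ g)
    (ys : ∀ i : Fin (k + 1), Fin n → Y i) :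
    ptildeCM k Y P n φ g ys ≤ iidK k Y P n ys / DeltaCM k Y P n φ g := by
  unfold ptildeCM
  split
  · exact le_rfl
  · have h1 := iidK_nonneg hP n ys
    positivity

lemma margSeqT_nonneg (hP : ∀ y, 0 ≤ P y) (n : ℕ) (φ : ∀ ℓ : ℕ, (Fin n → Y ℓ) → ℕ → ℕ)
    (g : (Fin n → Y k) → ℕ → Bool) (i : Fin (k + 1)) (s : Fin n → Y i) :
    0 ≤ margSeqT k Y P n φ g i s :=
  probEq_nonneg (ptildeCM_nonneg hP n φ g) _ _

lemma margSeqT_le (hP : ∀ y, 0 ≤ P y) (n : ℕ) (φ : ∀ ℓ : ℕ, (Fin n → Y ℓ) → ℕ → ℕ)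
    (g : (Fin n → Y k) → ℕ → Bool) (hΔ : 0 < DeltaCM k Y P n φ g)
    (i : Fin (k + 1)) (s : Fin n → Y i) :
    margSeqT k Y P n φ g i s
      ≤ probEq (iidK k Y P n) (fun ys => ys i) s / DeltaCM k Y P n φ g := by
  unfold margSeqT probEq
  rw [Finset.sum_div]
  refine Finset.sum_le_sum fun ys _ => ?_
  split
  · exact ptildeCM_le hP n φ g hΔ ys
  · positivity

/-- the marginal of the iid law is the iid law of the marginal -/
lemma probEq_iidK (n : ℕ) (i : Fin (k + 1)) (s : Fin n → Y i) :
    probEq (iidK k Y P n) (fun ys => ys i) s = ∏ t, margK k Y P i (s t) := by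
  unfold probEq iidK margK
  rw [Finset.prod_univ_sum, Fintype.piFinset_univ]
  exact Fintype.sum_equiv
    (⟨fun ys t i => ys i t, fun w i t => w t i, fun _ => rfl, fun _ => rfl⟩ :
      (∀ i : Fin (k+1), Fin n → Y (i : ℕ)) ≃ (Fin n → ∀ i : Fin (k+1), Y (i : ℕ)))
    (fun ys => @ite ℝ (ys i = s) (propDecidable _) (∏ t, P fun j => ys j t) 0)
    (fun w => ∏ t, if w t i = s t then P (w t) else 0)
    (fun ys => by
      show _ = ∏ t : Fin n, if ys i t = s t then P (fun j => ys j t) else 0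
      rw [prod_ite_zero (fun t => ys i t = s t) (fun t => P (fun j => ys j t))]
      by_cases hc : ys i = s
      · rw [if_pos (fun t : Fin n => congrFun hc t)]; exact if_pos hc
      · rw [if_neg (fun h => hc (funext h))]; exact if_neg hc)

lemma iidQK_eq_prod (n : ℕ) (ys : ∀ i : Fin (k + 1), Fin n → Y i) :
    iidQK k Y P n ys = ∏ i, ∏ t, margK k Y P i (ys i t) := by
  unfold iidQK prodMargK
  exact Finset.prod_comm

lemma msgRec_congr (n : ℕ) (φ : ∀ ℓ : ℕ, (Fin n → Y ℓ) → ℕ → ℕ)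
    (ys zs : ∀ ℓ : ℕ, Fin n → Y ℓ) :
    ∀ j, (∀ ℓ, ℓ ≤ j → ys ℓ = zs ℓ) → msgRec Y n φ ys j = msgRec Y n φ zs j
  | 0, h => by simp only [msgRec, h 0 le_rfl]
  | (j+1), h => by
      simp only [msgRec, h (j+1) le_rfl,
        msgRec_congr n φ ys zs j (fun ℓ hℓ => h ℓ (hℓ.trans (Nat.le_succ j)))]

lemma msg_res (hk : 1 ≤ k) (n : ℕ) (φ : ∀ ℓ : ℕ, (Fin n → Y ℓ) → ℕ → ℕ)
    (ys : ∀ i : Fin (k + 1), Fin n → Y i) :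
    msgRec Y n φ (partialExt k Y n (fun j : Fin k => ys (idxLo k j))) (k-1)
      = msgRec Y n φ (extendTup k Y n ys) (k-1) := by
  refine msgRec_congr n φ _ _ (k-1) fun ℓ hℓ => ?_
  have hℓk : ℓ < k := lt_of_le_of_lt hℓ (Nat.sub_lt hk Nat.one_pos)
  unfold partialExt extendTup
  rw [dif_pos (hℓk.trans (Nat.lt_succ_self k))]
  exact dif_pos hℓk

lemma extendTup_last (n : ℕ) (ys : ∀ i : Fin (k + 1), Fin n → Y i) :
    extendTup k Y n ys k = ys (Fin.last k) := by
  unfold extendTup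
  rw [dif_pos (Nat.lt_succ_self k)]
  rfl

end Aux2
section Aux3
set_option linter.unusedSectionVars false
set_option linter.unusedVariables false
open Classical

/-- Gibbs' inequality / change-of-measure lower bound. -/
lemma gibbs_logb {ι : Type*} (s : Finset ι) (p q : ι → ℝ) (hp : ∀ z ∈ s, 0 ≤ p z)
    (hsum : ∑ z ∈ s, p z = 1) (hpq : ∀ z ∈ s, 0 < p z → 0 < q z) (Q : ℝ) (hQ : 0 < Q)
    (hqQ : ∑ z ∈ s.filter (fun z => 0 < p z), q z ≤ Q) :
    -Real.logb 2 Q ≤ ∑ z ∈ s, p z * Real.logb 2 (p z / q z) := by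
  classical
  set s' := s.filter (fun z => 0 < p z) with hs'
  have hsub : s' ⊆ s := Finset.filter_subset _ _
  have hzero : ∀ z ∈ s, z ∉ s' → p z = 0 := by
    intro z hz hz'
    have : ¬ 0 < p z := by
      intro h; exact hz' (Finset.mem_filter.mpr ⟨hz, h⟩)
    linarith [hp z hz]
  have hsum' : ∑ z ∈ s', p z = 1 := by
    rw [← hsum]
    exact Finset.sum_subset hsub (fun z hz hz' => hzero z hz hz')
  have hEq : ∑ z ∈ s, p z * Real.logb 2 (p z / q z)
      = ∑ z ∈ s', p z * Real.logb 2 (p z / q z) := by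
    symm
    exact Finset.sum_subset hsub (fun z hz hz' => by rw [hzero z hz hz', zero_mul])
  rw [hEq]
  have key : ∑ z ∈ s', (-(p z * Real.log (p z / q z)) - p z * Real.log Q) ≤ 0 := by
    have h1 : ∀ z ∈ s', -(p z * Real.log (p z / q z)) - p z * Real.log Q ≤ q z / Q - p z := by
      intro z hz
      have hpz : 0 < p z := (Finset.mem_filter.mp hz).2
      have hqz : 0 < q z := hpq z (hsub hz) hpz
      have hx : 0 < q z / (p z * Q) := by positivity
      have hlog := Real.log_le_sub_one_of_pos hx
      have hrw : Real.log (q z / (p z * Q))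
          = -(Real.log (p z / q z)) - Real.log Q := by
        rw [Real.log_div hqz.ne' (by positivity), Real.log_mul hpz.ne' hQ.ne',
          Real.log_div hpz.ne' hqz.ne']
        ring
      have := mul_le_mul_of_nonneg_left hlog hpz.le
      rw [hrw] at this
      calc -(p z * Real.log (p z / q z)) - p z * Real.log Q
          = p z * (-Real.log (p z / q z) - Real.log Q) := by ring
        _ ≤ p z * (q z / (p z * Q) - 1) := this
        _ = q z / Q - p z := by field_simp
      
    calc ∑ z ∈ s', (-(p z * Real.log (p z / q z)) - p z * Real.log Q)
        ≤ ∑ z ∈ s', (q z / Q - p z) := Finset.sum_le_sum h1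
      _ = (∑ z ∈ s', q z) / Q - 1 := by rw [Finset.sum_sub_distrib, hsum', ← Finset.sum_div]
      _ ≤ 0 := by
          have : (∑ z ∈ s', q z) / Q ≤ 1 := (div_le_one hQ).mpr hqQ
          linarith
  have key2 : -Real.log Q ≤ ∑ z ∈ s', p z * Real.log (p z / q z) := by
    have expand : ∑ z ∈ s', (-(p z * Real.log (p z / q z)) - p z * Real.log Q)
        = -(∑ z ∈ s', p z * Real.log (p z / q z)) - Real.log Q := by
      rw [Finset.sum_sub_distrib, Finset.sum_neg_distrib, ← Finset.sum_mul, hsum', one_mul]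
    rw [expand] at key
    linarith
  have hlog2 : (0:ℝ) < Real.log 2 := Real.log_pos one_lt_two
  simp only [Real.logb]
  rw [Finset.sum_congr rfl (fun z _ => (mul_div_assoc (p z) _ _).symm), ← Finset.sum_div,
    ← neg_div]
  exact (div_le_div_iff_of_pos_right hlog2).mpr key2

end Aux3
section Aux4
set_option linter.unusedSectionVars false
set_option linter.unusedVariables false
open Classical

variable {k : ℕ} {Y : ℕ → Type} [∀ i, Fintype (Y i)] [∀ i, Nonempty (Y i)]
variable {P : (∀ i : Fin (k + 1), Y i) → ℝ}

lemma sum_pi_split (n : ℕ) (F : (∀ i : Fin (k+1), Fin n → Y (i:ℕ)) → ℝ) :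
    ∑ ys, F ys = ∑ pys : ∀ j : Fin k, Fin n → Y (j:ℕ), ∑ yk : Fin n → Y k,
      F (Fin.snoc (α := fun i : Fin (k+1) => Fin n → Y (i:ℕ)) pys yk) := by
  rw [← Fintype.sum_equiv (Fin.snocEquiv (fun i : Fin (k+1) => Fin n → Y (i:ℕ)))
      (fun p => F (Fin.snoc p.2 p.1)) F (fun p => rfl), Fintype.sum_prod_type]
  exact Finset.sum_comm

lemma idxLo_eq_castSucc (j : Fin k) : idxLo k j = Fin.castSucc j := rfl

lemma betaCM_expand (hk : 1 ≤ k) (n : ℕ) (φ : ∀ ℓ : ℕ, (Fin n → Y ℓ) → ℕ → ℕ)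
    (g : (Fin n → Y k) → ℕ → Bool) :
    betaCM k Y P n φ g
      = ∑ pys : ∀ j : Fin k, Fin n → Y (j:ℕ), ∑ yk : Fin n → Y k,
        (∏ j : Fin k, ∏ t, margK k Y P (idxLo k j) (pys j t)) *
          (∏ t, margK k Y P (Fin.last k) (yk t)) *
          (if g yk (msgRec Y n φ (partialExt k Y n pys) (k - 1)) = false then 1 else 0) := by
  unfold betaCM probSet
  have step1 : ∀ ys : ∀ i : Fin (k+1), Fin n → Y (i:ℕ),
      (if ys ∈ acceptSet k Y n φ g then iidQK k Y P n ys else 0)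
        = (∏ j : Fin k, ∏ t, margK k Y P (idxLo k j) (ys (idxLo k j) t)) *
            (∏ t, margK k Y P (Fin.last k) (ys (Fin.last k) t)) *
            (if g (ys (Fin.last k))
                (msgRec Y n φ (partialExt k Y n (fun j => ys (idxLo k j))) (k - 1)) = false
              then 1 else 0) := by
    intro ys
    have hacc : (ys ∈ acceptSet k Y n φ g) ↔
        g (ys (Fin.last k))
            (msgRec Y n φ (partialExt k Y n (fun j => ys (idxLo k j))) (k - 1)) = false := by
      unfold acceptSet
      rw [Set.mem_setOf_eq, extendTup_last, msg_res hk]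
    have hprod : iidQK k Y P n ys
        = (∏ j : Fin k, ∏ t, margK k Y P (idxLo k j) (ys (idxLo k j) t)) *
            (∏ t, margK k Y P (Fin.last k) (ys (Fin.last k) t)) := by
      rw [iidQK_eq_prod]
      exact Fin.prod_univ_castSucc (fun i : Fin (k+1) => ∏ t, margK k Y P i (ys i t))
    by_cases hc : g (ys (Fin.last k))
        (msgRec Y n φ (partialExt k Y n (fun j => ys (idxLo k j))) (k - 1)) = false
    · rw [if_pos (hacc.mpr hc), if_pos hc, mul_one, hprod]
    · rw [if_neg (fun h => hc (hacc.mp h)), if_neg hc, mul_zero]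
  rw [Finset.sum_congr rfl fun ys _ => step1 ys, sum_pi_split]
  refine Finset.sum_congr rfl fun pys _ => Finset.sum_congr rfl fun yk _ => ?_
  simp only [idxLo_eq_castSucc, Fin.snoc_castSucc, Fin.snoc_last]

lemma QmsgCM_eq_probEq (n : ℕ) (φ : ∀ ℓ : ℕ, (Fin n → Y ℓ) → ℕ → ℕ)
    (g : (Fin n → Y k) → ℕ → Bool) (m : ℕ) :
    QmsgCM k Y P n φ g m
      = probEq (fun pys : ∀ j : Fin k, Fin n → Y (j:ℕ) =>
            ∏ j : Fin k, margSeqT k Y P n φ g (idxLo k j) (pys j))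
          (fun pys => msgRec Y n φ (partialExt k Y n pys) (k-1)) m := by
  unfold QmsgCM probEq
  refine Finset.sum_congr rfl fun pys _ => ?_
  by_cases h : msgRec Y n φ (partialExt k Y n pys) (k-1) = m <;> simp [h]

lemma QPaccCM_regroup (n : ℕ) (φ : ∀ ℓ : ℕ, (Fin n → Y ℓ) → ℕ → ℕ)
    (g : (Fin n → Y k) → ℕ → Bool) :
    QPaccCM k Y P n φ g
      = ∑ z ∈ (Finset.image (fun pys : ∀ j : Fin k, Fin n → Y (j:ℕ) =>
            msgRec Y n φ (partialExt k Y n pys) (k-1)) Finset.univ) ×ˢ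
            (Finset.univ : Finset (Fin n → Y k)),
          QmsgCM k Y P n φ g z.1 * margSeqT k Y P n φ g (Fin.last k) z.2 *
            (if g z.2 z.1 = false then 1 else 0) := by
  have hper : ∀ yk : Fin n → Y k,
      (∑ pys : ∀ j : Fin k, Fin n → Y (j:ℕ),
        (∏ j : Fin k, margSeqT k Y P n φ g (idxLo k j) (pys j)) *
          margSeqT k Y P n φ g (Fin.last k) yk *
          (if g yk (msgRec Y n φ (partialExt k Y n pys) (k - 1)) = false then 1 else 0))
      = ∑ m ∈ Finset.image (fun pys : ∀ j : Fin k, Fin n → Y (j:ℕ) =>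
            msgRec Y n φ (partialExt k Y n pys) (k-1)) Finset.univ,
          QmsgCM k Y P n φ g m * margSeqT k Y P n φ g (Fin.last k) yk *
            (if g yk m = false then 1 else 0) := by
    intro yk
    have h := sum_probEq_mul
      (fun pys : ∀ j : Fin k, Fin n → Y (j:ℕ) =>
        ∏ j : Fin k, margSeqT k Y P n φ g (idxLo k j) (pys j))
      (fun pys => msgRec Y n φ (partialExt k Y n pys) (k-1))
      (fun m => margSeqT k Y P n φ g (Fin.last k) yk * (if g yk m = false then 1 else 0))
    rw [Finset.sum_congr rfl (fun pys _ => mul_assoc _ _ _), h]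
    refine Finset.sum_congr rfl fun m _ => ?_
    rw [QmsgCM_eq_probEq, mul_assoc]
  calc QPaccCM k Y P n φ g
      = ∑ yk : Fin n → Y k, ∑ pys : ∀ j : Fin k, Fin n → Y (j:ℕ),
        (∏ j : Fin k, margSeqT k Y P n φ g (idxLo k j) (pys j)) *
          margSeqT k Y P n φ g (Fin.last k) yk *
          (if g yk (msgRec Y n φ (partialExt k Y n pys) (k - 1)) = false then 1 else 0) :=
        Finset.sum_comm
    _ = ∑ yk : Fin n → Y k, ∑ m ∈ Finset.image (fun pys : ∀ j : Fin k, Fin n → Y (j:ℕ) =>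
            msgRec Y n φ (partialExt k Y n pys) (k-1)) Finset.univ,
          QmsgCM k Y P n φ g m * margSeqT k Y P n φ g (Fin.last k) yk *
            (if g yk m = false then 1 else 0) :=
        Finset.sum_congr rfl fun yk _ => hper yk
    _ = _ := by
        rw [Finset.sum_product (f := fun z : ℕ × (Fin n → Y k) =>
          QmsgCM k Y P n φ g z.1 * margSeqT k Y P n φ g (Fin.last k) z.2 *
            (if g z.2 z.1 = false then 1 else 0))]
        exact Finset.sum_comm

end Aux4
section Aux5
set_option linter.unusedSectionVars false
set_option linter.unusedVariables false
open Classical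

variable {k : ℕ} {Y : ℕ → Type} [∀ i, Fintype (Y i)] [∀ i, Nonempty (Y i)]
variable {P : (∀ i : Fin (k + 1), Y i) → ℝ}

lemma margK_nonneg (hP : ∀ y, 0 ≤ P y) (i : Fin (k + 1)) (c : Y i) :
    0 ≤ margK k Y P i c := by
  unfold margK
  refine Finset.sum_nonneg fun y _ => ?_
  split <;> simp [hP y]

lemma QmsgCM_nonneg (hP : ∀ y, 0 ≤ P y) (n : ℕ) (φ : ∀ ℓ : ℕ, (Fin n → Y ℓ) → ℕ → ℕ)
    (g : (Fin n → Y k) → ℕ → Bool) (m : ℕ) : 0 ≤ QmsgCM k Y P n φ g m := by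
  rw [QmsgCM_eq_probEq]
  exact probEq_nonneg (fun pys => Finset.prod_nonneg fun j _ =>
    margSeqT_nonneg hP n φ g _ _) _ _

end Aux5
/-- change-of-measure bound on the type-II error:
`(Q_{M̃_k} × P_{Ỹ_kⁿ})(A_k) ≤ β_{k,n} · Δ_k^{−(k+1)}`, and since
`P_{M̃_k Ỹ_kⁿ}(A_k) = 1`, it follows that
`−(1/n)·log β_{k,n} ≤ (1/n)·D(P_{M̃_k Ỹ_kⁿ} ‖ Q_{M̃_k} × P_{Ỹ_kⁿ}) + δ_n'`, where
`δ_n' := 1/n − ((k+1)/n)·log Δ_k`. -/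
theorem khop_change_of_measure_type_II_bound
    (k : ℕ) (Y : ℕ → Type) [∀ i, Fintype (Y i)] [∀ i, Nonempty (Y i)]
    (hk : 1 ≤ k)
    (P : (∀ i : Fin (k + 1), Y i) → ℝ) (hP : IsPMF P) (hMC : IsMarkovChainK k Y P)
    (εk : ℝ) (hε0 : 0 ≤ εk) (hε1 : εk < 1)
    (φ : ∀ n : ℕ, ∀ ℓ : ℕ, (Fin n → Y ℓ) → ℕ → ℕ)
    (g : ∀ n : ℕ, (Fin n → Y k) → ℕ → Bool)
    (hα : limsup (fun n => alphaCM k Y P n (φ n) (g n)) atTop ≤ εk) :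
    ∀ n : ℕ, 0 < DeltaCM k Y P n (φ n) (g n) →
      QPaccCM k Y P n (φ n) (g n)
          ≤ betaCM k Y P n (φ n) (g n) * DeltaCM k Y P n (φ n) (g n) ^ (-((k : ℤ) + 1)) ∧
      (0 < betaCM k Y P n (φ n) (g n) →
        -(Real.logb 2 (betaCM k Y P n (φ n) (g n))) / n
          ≤ klJointCM k Y P n (φ n) (g n) / n
            + (1 / (n : ℝ) - (((k : ℝ) + 1) / n) *
                Real.logb 2 (DeltaCM k Y P n (φ n) (g n)))) := by
  intro n hΔ
  classical
  have hP0 : ∀ y, 0 ≤ P y := hP.1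
  set Δ : ℝ := DeltaCM k Y P n (φ n) (g n) with hΔdef
  have hpow : (0:ℝ) < Δ ^ (k+1) := pow_pos hΔ _
  have hMle := margSeqT_le hP0 n (φ n) (g n) hΔ
  have hm0 := margSeqT_nonneg hP0 n (φ n) (g n)
  -- Part (a)
  have key_a : QPaccCM k Y P n (φ n) (g n) ≤ betaCM k Y P n (φ n) (g n) / Δ ^ (k+1) := by
    rw [betaCM_expand hk n (φ n) (g n), Finset.sum_div]
    unfold QPaccCM
    refine Finset.sum_le_sum fun pys _ => ?_
    rw [Finset.sum_div]
    refine Finset.sum_le_sum fun yk _ => ?_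
    by_cases hg : g n yk (msgRec Y n (φ n) (partialExt k Y n pys) (k - 1)) = false
    · rw [if_pos hg, mul_one, mul_one]
      have e1 : ∀ j : Fin k, margSeqT k Y P n (φ n) (g n) (idxLo k j) (pys j)
          ≤ (∏ t, margK k Y P (idxLo k j) (pys j t)) / Δ := fun j =>
        (probEq_iidK n (idxLo k j) (pys j)) ▸ hMle (idxLo k j) (pys j)
      have e2 : margSeqT k Y P n (φ n) (g n) (Fin.last k) yk
          ≤ (∏ t, margK k Y P (Fin.last k) (yk t)) / Δ :=
        (probEq_iidK n (Fin.last k) yk) ▸ hMle (Fin.last k) yk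
      have hM1 : (0:ℝ) ≤ ∏ j : Fin k, ∏ t, margK k Y P (idxLo k j) (pys j t) :=
        Finset.prod_nonneg fun j _ => Finset.prod_nonneg fun t _ => margK_nonneg hP0 _ _
      have h1 : ∏ j : Fin k, margSeqT k Y P n (φ n) (g n) (idxLo k j) (pys j)
          ≤ (∏ j : Fin k, ∏ t, margK k Y P (idxLo k j) (pys j t)) / Δ ^ k := by
        calc ∏ j : Fin k, margSeqT k Y P n (φ n) (g n) (idxLo k j) (pys j)
            ≤ ∏ j : Fin k, ((∏ t, margK k Y P (idxLo k j) (pys j t)) / Δ) :=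
              Finset.prod_le_prod (fun j _ => hm0 _ _) (fun j _ => e1 j)
          _ = (∏ j : Fin k, ∏ t, margK k Y P (idxLo k j) (pys j t)) / Δ ^ k := by
              rw [Finset.prod_div_distrib, Finset.prod_const, Finset.card_univ,
                Fintype.card_fin]
      calc (∏ j : Fin k, margSeqT k Y P n (φ n) (g n) (idxLo k j) (pys j)) *
            margSeqT k Y P n (φ n) (g n) (Fin.last k) yk
          ≤ ((∏ j : Fin k, ∏ t, margK k Y P (idxLo k j) (pys j t)) / Δ ^ k) *
            ((∏ t, margK k Y P (Fin.last k) (yk t)) / Δ) := by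
            refine mul_le_mul h1 e2 (hm0 _ _) ?_
            positivity
        _ = (∏ j : Fin k, ∏ t, margK k Y P (idxLo k j) (pys j t)) *
            (∏ t, margK k Y P (Fin.last k) (yk t)) / Δ ^ (k+1) := by
            rw [div_mul_div_comm, ← pow_succ]
    · rw [if_neg hg, mul_zero, mul_zero, zero_div]
  have hzpow : Δ ^ (-((k : ℤ) + 1)) = (Δ ^ (k+1))⁻¹ := by
    rw [show (-((k : ℤ) + 1)) = -((k+1 : ℕ) : ℤ) by push_cast; ring, zpow_neg, zpow_natCast]
  refine ⟨by rw [hzpow, ← div_eq_mul_inv]; exact key_a, ?_⟩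
  -- Part (b)
  intro hβ
  set pt := ptildeCM k Y P n (φ n) (g n) with hptdef
  have hpt0 : ∀ ys, 0 ≤ pt ys := ptildeCM_nonneg hP0 n (φ n) (g n)
  set MY := MYpairCM k Y n (φ n) with hMYdef
  set pf : ℕ × (Fin n → Y k) → ℝ := fun z => probEq pt MY z with hpfdef
  set qf : ℕ × (Fin n → Y k) → ℝ := fun z =>
    QmsgCM k Y P n (φ n) (g n) z.1 * margSeqT k Y P n (φ n) (g n) (Fin.last k) z.2
    with hqfdef
  set S := Finset.image MY Finset.univ with hSdef
  have hkl : klJointCM k Y P n (φ n) (g n)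
      = ∑ z ∈ S, pf z * Real.logb 2 (pf z / qf z) := by
    unfold klJointCM
    exact sum_probEq_mul pt MY (fun z => Real.logb 2 (pf z / qf z))
  -- support facts
  have hDmem : ∀ ys, 0 < pt ys → ys ∈ DsetCM k Y P n (φ n) (g n) := by
    intro ys h
    by_contra hc
    rw [hptdef] at h
    unfold ptildeCM at h
    rw [if_neg hc] at h
    exact lt_irrefl _ h
  have hmT_ge : ∀ (ys : ∀ i : Fin (k+1), Fin n → Y (i:ℕ)) (i : Fin (k+1)),
      pt ys ≤ margSeqT k Y P n (φ n) (g n) i (ys i) :=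
    fun ys i => le_probEq hpt0 (fun ys' => ys' i) rfl
  have hQpos : ∀ ys, 0 < pt ys →
      0 < QmsgCM k Y P n (φ n) (g n) (msgRec Y n (φ n) (extendTup k Y n ys) (k-1)) := by
    intro ys h
    rw [QmsgCM_eq_probEq]
    refine lt_of_lt_of_le ?_
      (le_probEq (fun pys => Finset.prod_nonneg fun j _ => hm0 _ _)
        (fun pys => msgRec Y n (φ n) (partialExt k Y n pys) (k-1))
        (ω₀ := fun j : Fin k => ys (idxLo k j)) (msg_res hk n (φ n) ys))
    exact Finset.prod_pos fun j _ => lt_of_lt_of_le h (hmT_ge ys (idxLo k j))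
  have hMTpos : ∀ ys, 0 < pt ys →
      0 < margSeqT k Y P n (φ n) (g n) (Fin.last k) (ys (Fin.last k)) :=
    fun ys h => lt_of_lt_of_le h (hmT_ge ys (Fin.last k))
  have hpf_supp : ∀ z, 0 < pf z → ∃ ys, 0 < pt ys ∧ MY ys = z := by
    intro z h
    rw [hpfdef] at h
    unfold probEq at h
    obtain ⟨ys, -, hlt⟩ := Finset.exists_lt_of_sum_lt (f := fun _ => (0:ℝ))
      (by simpa using h)
    by_cases hc : MY ys = z
    · rw [if_pos hc] at hlt
      exact ⟨ys, hlt, hc⟩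
    · rw [if_neg hc] at hlt
      exact absurd hlt (lt_irrefl 0)
  have hMYsnd : ∀ ys, (MY ys).2 = ys (Fin.last k) := by
    intro ys
    rw [hMYdef]
    unfold MYpairCM
    exact extendTup_last n ys
  have hqf_pos : ∀ z ∈ S, 0 < pf z → 0 < qf z := by
    intro z _ h
    obtain ⟨ys, hys, rfl⟩ := hpf_supp z h
    refine mul_pos (hQpos ys hys) ?_
    rw [hMYsnd ys]
    exact hMTpos ys hys
  have hsumS : ∑ z ∈ S, pf z = 1 := by
    have h := sum_probEq_mul pt MY (fun _ => (1:ℝ))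
    simp only [mul_one] at h
    rw [hSdef, hpfdef, ← h]
    exact sum_ptildeCM hP0 n (φ n) (g n) hΔ
  set T := Finset.image (fun pys : ∀ j : Fin k, Fin n → Y (j:ℕ) =>
    msgRec Y n (φ n) (partialExt k Y n pys) (k-1)) Finset.univ with hTdef
  have hqf0 : ∀ z : ℕ × (Fin n → Y k), 0 ≤ qf z := fun z =>
    mul_nonneg (QmsgCM_nonneg hP0 n (φ n) (g n) z.1) (hm0 _ _)
  have hsubset : S.filter (fun z => 0 < pf z)
      ⊆ (T ×ˢ (Finset.univ : Finset (Fin n → Y k))).filter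
          (fun z => g n z.2 z.1 = false) := by
    intro z hz
    obtain ⟨hzS, hzpos⟩ := Finset.mem_filter.mp hz
    obtain ⟨ys, hys, rfl⟩ := hpf_supp z hzpos
    refine Finset.mem_filter.mpr ⟨Finset.mem_product.mpr ⟨?_, Finset.mem_univ _⟩, ?_⟩
    · have h1 : (MY ys).1 = msgRec Y n (φ n)
          (partialExt k Y n (fun j : Fin k => ys (idxLo k j))) (k-1) :=
        (msg_res hk n (φ n) ys).symm
      rw [hTdef, h1]
      exact Finset.mem_image_of_mem _ (Finset.mem_univ _)
    · have hacc : ys ∈ acceptSet k Y n (φ n) (g n) := (hDmem ys hys).1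
      rw [hMYsnd ys, ← extendTup_last n ys]
      exact hacc
  have hQP_eq : ∑ z ∈ (T ×ˢ (Finset.univ : Finset (Fin n → Y k))).filter
        (fun z => g n z.2 z.1 = false), qf z = QPaccCM k Y P n (φ n) (g n) := by
    rw [QPaccCM_regroup, Finset.sum_filter]
    refine Finset.sum_congr rfl fun z _ => ?_
    by_cases hc : g n z.2 z.1 = false <;> simp [hc, hqfdef]
  have hqQ : ∑ z ∈ S.filter (fun z => 0 < pf z), qf z ≤ QPaccCM k Y P n (φ n) (g n) :=
    le_trans (Finset.sum_le_sum_of_subset_of_nonneg hsubset (fun z _ _ => hqf0 z))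
      (le_of_eq hQP_eq)
  -- positivity of QPacc
  have hQPpos : 0 < QPaccCM k Y P n (φ n) (g n) := by
    obtain ⟨ys₀, -, hlt⟩ := Finset.exists_lt_of_sum_lt (f := fun _ => (0:ℝ))
      (show (∑ _ys : ∀ i : Fin (k+1), Fin n → Y (i:ℕ), (0:ℝ))
          < ∑ ys, (if ys ∈ DsetCM k Y P n (φ n) (g n) then iidK k Y P n ys else 0) by
        rw [Finset.sum_const_zero]; exact hΔ)
    have hys₀ : 0 < pt ys₀ := by
      by_cases hc : ys₀ ∈ DsetCM k Y P n (φ n) (g n)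
      · rw [if_pos hc] at hlt
        rw [hptdef]
        unfold ptildeCM
        rw [if_pos hc]
        positivity
      · rw [if_neg hc] at hlt
        exact absurd hlt (lt_irrefl 0)
    have hz₀S : MY ys₀ ∈ S := Finset.mem_image_of_mem _ (Finset.mem_univ _)
    have hpfz₀ : 0 < pf (MY ys₀) := lt_of_lt_of_le hys₀ (le_probEq hpt0 MY rfl)
    have hz₀f : MY ys₀ ∈ S.filter (fun z => 0 < pf z) :=
      Finset.mem_filter.mpr ⟨hz₀S, hpfz₀⟩
    exact lt_of_lt_of_le
      (lt_of_lt_of_le (hqf_pos _ hz₀S hpfz₀)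
        (Finset.single_le_sum (fun z _ => hqf0 z) hz₀f)) hqQ
  -- Gibbs
  have hgibbs : -Real.logb 2 (QPaccCM k Y P n (φ n) (g n))
      ≤ klJointCM k Y P n (φ n) (g n) := by
    rw [hkl]
    exact gibbs_logb S pf qf (fun z _ => probEq_nonneg hpt0 _ _) hsumS hqf_pos _ hQPpos hqQ
  -- arithmetic
  have hβge : QPaccCM k Y P n (φ n) (g n) * Δ ^ (k+1) ≤ betaCM k Y P n (φ n) (g n) :=
    (le_div_iff₀ hpow).mp key_a
  have hlogβ : Real.logb 2 (QPaccCM k Y P n (φ n) (g n)) + ((k:ℝ)+1) * Real.logb 2 Δ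
      ≤ Real.logb 2 (betaCM k Y P n (φ n) (g n)) := by
    have h1 : Real.logb 2 (QPaccCM k Y P n (φ n) (g n) * Δ ^ (k+1))
        ≤ Real.logb 2 (betaCM k Y P n (φ n) (g n)) :=
      Real.logb_le_logb_of_le one_lt_two (mul_pos hQPpos hpow) hβge
    rw [Real.logb_mul hQPpos.ne' (pow_ne_zero _ hΔ.ne'), Real.logb_pow] at h1
    push_cast at h1
    exact h1
  have hfinal : -Real.logb 2 (betaCM k Y P n (φ n) (g n))
      ≤ klJointCM k Y P n (φ n) (g n) - ((k:ℝ)+1) * Real.logb 2 Δ := by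
    linarith
  rcases Nat.eq_zero_or_pos n with hn | hn
  · subst hn
    simp
  · have hnR : (0:ℝ) < n := by exact_mod_cast hn
    have h1 : -Real.logb 2 (betaCM k Y P n (φ n) (g n)) / n
        ≤ (klJointCM k Y P n (φ n) (g n) - ((k:ℝ)+1) * Real.logb 2 Δ) / n :=
      (div_le_div_iff_of_pos_right hnR).mpr hfinal
    have h2 : (klJointCM k Y P n (φ n) (g n) - ((k:ℝ)+1) * Real.logb 2 Δ) / n
        = klJointCM k Y P n (φ n) (g n) / n - (((k:ℝ)+1) / n) * Real.logb 2 Δ := by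
      ring
    have h3 : 0 ≤ 1 / (n:ℝ) := by positivity
    rw [h2] at h1
    linarith
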